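/- Lemma F.6 (boundedness of the Wasserstein dual). Let (S,d) be a nonempty finite metric space, l ≥ 1, δ > 0, p ∈ Δ(S), V : S → ℝ, and define g(λ) := −λ·δ^l + Σ_x p(x)·min_{y ∈ S}(V(y) + λ·d(x,y)^l) for λ ≥ 0. Then: (i) sup_{λ ≥ 0} g(λ) = sup_{0 ≤ λ ≤ 2‖V‖/δ^l} g(λ) (in particular the supremum over λ ≥ 0 is attained at some λ* with λ* ≤ 2‖V‖/δ^l); and (ii) |sup_{λ ≥ 0} g(λ)| ≤ ‖V‖. -/

import Mathlib

theorem wasserstein_dual_bounded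
    {S : Type*} [Fintype S] [Nonempty S] [MetricSpace S]
    (l : ℝ) (hl : 1 ≤ l) (δ : ℝ) (hδ : 0 < δ)
    (p : S → ℝ) (hp : (∀ s, 0 ≤ p s) ∧ ∑ s, p s = 1)
    (V : S → ℝ)
    (g : ℝ → ℝ)
    (hg : ∀ lam : ℝ,
      g lam = -lam * δ ^ l
        + ∑ x, p x * Finset.univ.inf' Finset.univ_nonempty
            (fun y => V y + lam * dist x y ^ l)) :
    -- (i) the sup over λ ≥ 0 equals the sup over the compact interval, and is attained there
    (sSup {x : ℝ | ∃ lam : ℝ, 0 ≤ lam ∧ x = g lam}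
      = sSup {x : ℝ | ∃ lam : ℝ, (0 ≤ lam ∧ lam ≤ 2 * ‖V‖ / δ ^ l) ∧ x = g lam})
    ∧
    (∃ lamstar : ℝ, 0 ≤ lamstar ∧ lamstar ≤ 2 * ‖V‖ / δ ^ l
      ∧ g lamstar = sSup {x : ℝ | ∃ lam : ℝ, 0 ≤ lam ∧ x = g lam})
    ∧
    -- (ii) bound on the optimal value
    |sSup {x : ℝ | ∃ lam : ℝ, 0 ≤ lam ∧ x = g lam}| ≤ ‖V‖ := by
  obtain ⟨hp0, hp1⟩ := hp
  have hl0 : l ≠ 0 := by positivity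
  have hδl : (0:ℝ) < δ ^ l := Real.rpow_pos_of_pos hδ l
  set B : ℝ := 2 * ‖V‖ / δ ^ l with hB
  have hB0 : 0 ≤ B := by positivity
  -- basic bounds on V
  have hVle : ∀ y : S, |V y| ≤ ‖V‖ := fun y => norm_le_pi_norm V y
  -- inf' ≤ V x  (take y = x)
  have hinf_le : ∀ (lam : ℝ) (x : S),
      Finset.univ.inf' Finset.univ_nonempty (fun y => V y + lam * dist x y ^ l) ≤ V x := by
    intro lam x
    have := Finset.inf'_le (f := fun y => V y + lam * dist x y ^ l)
      (Finset.mem_univ x)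
    simpa only [dist_self, Real.zero_rpow hl0, mul_zero, add_zero] using this
  -- inf' ≥ -‖V‖ for lam ≥ 0
  have hinf_ge : ∀ (lam : ℝ), 0 ≤ lam → ∀ x : S,
      -‖V‖ ≤ Finset.univ.inf' Finset.univ_nonempty (fun y => V y + lam * dist x y ^ l) := by
    intro lam hlam x
    apply Finset.le_inf'
    intro y _
    have h1 : -‖V‖ ≤ V y := neg_le_of_abs_le (hVle y)
    have h2 : 0 ≤ lam * dist x y ^ l := by
      apply mul_nonneg hlam (Real.rpow_nonneg dist_nonneg l)
    linarith
  -- upper bound : g lam ≤ -lam * δ^l + ‖V‖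
  have hg_up : ∀ lam : ℝ, g lam ≤ -lam * δ ^ l + ‖V‖ := by
    intro lam
    rw [hg lam]
    have h1 : ∑ x, p x * Finset.univ.inf' Finset.univ_nonempty
        (fun y => V y + lam * dist x y ^ l) ≤ ∑ x : S, p x * ‖V‖ := by
      apply Finset.sum_le_sum
      intro x _
      exact mul_le_mul_of_nonneg_left ((hinf_le lam x).trans (le_of_abs_le (hVle x))) (hp0 x)
    have h2 : ∑ x : S, p x * ‖V‖ = ‖V‖ := by
      rw [← Finset.sum_mul, hp1, one_mul]
    linarith
  have hg_le : ∀ lam : ℝ, 0 ≤ lam → g lam ≤ ‖V‖ := by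
    intro lam hlam
    have := hg_up lam
    nlinarith
  -- lower bound at 0
  have hg0 : -‖V‖ ≤ g 0 := by
    rw [hg 0]
    have h1 : ∑ x : S, p x * (-‖V‖) ≤ ∑ x, p x * Finset.univ.inf' Finset.univ_nonempty
        (fun y => V y + (0:ℝ) * dist x y ^ l) := by
      apply Finset.sum_le_sum
      intro x _
      exact mul_le_mul_of_nonneg_left (hinf_ge 0 le_rfl x) (hp0 x)
    have h2 : ∑ x : S, p x * (-‖V‖) = -‖V‖ := by
      rw [← Finset.sum_mul, hp1, one_mul]
    simp only [neg_zero, zero_mul] at *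
    linarith
  -- continuity of g
  have hgc : Continuous g := by
    have : Continuous (fun lam : ℝ => -lam * δ ^ l
        + ∑ x, p x * Finset.univ.inf' Finset.univ_nonempty
            (fun y => V y + lam * dist x y ^ l)) := by
      apply Continuous.add
      · fun_prop
      · apply continuous_finset_sum
        intro x _
        apply Continuous.mul continuous_const
        exact Continuous.finset_inf'_apply Finset.univ_nonempty
          (fun y _ => by fun_prop)
    have heq : g = fun lam : ℝ => -lam * δ ^ l
        + ∑ x, p x * Finset.univ.inf' Finset.univ_nonempty
            (fun y => V y + lam * dist x y ^ l) := funext hg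
    rw [heq]; exact this
  -- the two sets
  set A : Set ℝ := {x : ℝ | ∃ lam : ℝ, 0 ≤ lam ∧ x = g lam} with hA
  set K : Set ℝ := {x : ℝ | ∃ lam : ℝ, (0 ≤ lam ∧ lam ≤ B) ∧ x = g lam} with hK
  have hKeq : K = g '' Set.Icc 0 B := by
    ext x; constructor
    · rintro ⟨lam, ⟨h1, h2⟩, rfl⟩; exact ⟨lam, ⟨h1, h2⟩, rfl⟩
    · rintro ⟨lam, ⟨h1, h2⟩, rfl⟩; exact ⟨lam, ⟨h1, h2⟩, rfl⟩
  have hKcompact : IsCompact K := by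
    rw [hKeq]; exact (isCompact_Icc).image hgc
  have hKne : K.Nonempty := ⟨g 0, 0, ⟨le_rfl, hB0⟩, rfl⟩
  have hAne : A.Nonempty := ⟨g 0, 0, le_rfl, rfl⟩
  have hKsubA : K ⊆ A := by rintro x ⟨lam, ⟨h1, _⟩, rfl⟩; exact ⟨lam, h1, rfl⟩
  have hAbdd : BddAbove A := by
    refine ⟨‖V‖, ?_⟩
    rintro x ⟨lam, hlam, rfl⟩
    exact hg_le lam hlam
  have hg0K : g 0 ∈ K := ⟨0, ⟨le_rfl, hB0⟩, rfl⟩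
  -- main inequality: for every a ∈ A, a ≤ sSup K
  have hALe : ∀ a ∈ A, a ≤ sSup K := by
    rintro a ⟨lam, hlam, rfl⟩
    by_cases h : lam ≤ B
    · exact le_csSup hKcompact.bddAbove ⟨lam, ⟨hlam, h⟩, rfl⟩
    · push_neg at h
      have h1 : g lam ≤ -lam * δ ^ l + ‖V‖ := hg_up lam
      have h2 : B * δ ^ l = 2 * ‖V‖ := by
        rw [hB, div_mul_cancel₀ _ hδl.ne']
      have h3 : g lam ≤ g 0 := by nlinarith
      exact h3.trans (le_csSup hKcompact.bddAbove hg0K)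
  have hsup_eq : sSup A = sSup K := by
    apply le_antisymm
    · exact csSup_le hAne hALe
    · exact csSup_le_csSup hAbdd hKne hKsubA
  refine ⟨hsup_eq, ?_, ?_⟩
  · -- attained
    obtain ⟨x, hG⟩ := hKcompact.exists_isGreatest hKne
    obtain ⟨lam, ⟨h1, h2⟩, hxg⟩ := hG.1
    refine ⟨lam, h1, h2, ?_⟩
    rw [hsup_eq, hG.csSup_eq]; exact hxg.symm
  · rw [abs_le]
    constructor
    · have := le_csSup hAbdd (show g 0 ∈ A from ⟨0, le_rfl, rfl⟩)
      linarith
    · exact csSup_le hAne (by rintro x ⟨lam, hlam, rfl⟩; exact hg_le lam hlam)
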